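/- If π(x) = li(x) + O(x^{1/2+ε}) for every ε > 0 (a consequence of the Riemann hypothesis), then there exists B ∈ ℝ such that for every ε > 0, ∑_{2 ≤ n ≤ x} 1/π(n) = log x · log(li(x)) − ∫_3^x log(li(t))/t dt + B + O(x^{−1/2+ε}) as x → ∞. -/

import Mathlib

open Filter Real

noncomputable def li (x : ℝ) : ℝ := ∫ t in (2:ℝ)..x, 1 / Real.log t

noncomputable def primePi (x : ℝ) : ℝ := Nat.primeCounting ⌊x⌋₊

open MeasureTheory intervalIntegral Set

lemma contOn_invlog {s : Set ℝ} (hs : s ⊆ Set.Ici 2) :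
    ContinuousOn (fun t => 1 / Real.log t) s := by
  apply ContinuousOn.div continuousOn_const
  · exact Real.continuousOn_log.mono (fun t ht => by
      have : (2:ℝ) ≤ t := hs ht
      simp; linarith)
  · intro t ht
    have h2 : (2:ℝ) ≤ t := hs ht
    have : Real.log 2 ≤ Real.log t := Real.log_le_log (by norm_num) h2
    have h02 : (0:ℝ) < Real.log 2 := Real.log_pos (by norm_num)
    linarith

lemma intInt_invlog {a b : ℝ} (ha : 2 ≤ a) (hb : 2 ≤ b) :
    IntervalIntegrable (fun t => 1 / Real.log t) volume a b := by
  apply (contOn_invlog ?_).intervalIntegrable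
  intro t ht
  rw [Set.uIcc_eq_union] at ht
  rcases ht with h | h
  · exact le_trans ha h.1
  · exact le_trans hb h.1

lemma li_mono {a b : ℝ} (ha : 2 ≤ a) (hab : a ≤ b) : li a ≤ li b := by
  have h1 : li b - li a = ∫ t in a..b, 1 / Real.log t := by
    unfold li
    rw [← intervalIntegral.integral_interval_sub_left (intInt_invlog (le_refl 2) (by linarith)) (intInt_invlog (le_refl 2) ha)]
  have h2 : 0 ≤ ∫ t in a..b, 1 / Real.log t := by
    apply intervalIntegral.integral_nonneg hab
    intro u hu
    have h2u : (2:ℝ) ≤ u := le_trans ha hu.1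
    have : (0:ℝ) < Real.log u := Real.log_pos (by linarith)
    positivity
  linarith

lemma li_lb {x : ℝ} (hx : 3 ≤ x) : (x - 2) / Real.log x ≤ li x := by
  have hlx : 0 < Real.log x := Real.log_pos (by linarith)
  have h : ∫ t in (2:ℝ)..x, 1 / Real.log x ≤ ∫ t in (2:ℝ)..x, 1 / Real.log t := by
    apply intervalIntegral.integral_mono_on (by linarith)
      (intervalIntegrable_const) (intInt_invlog le_rfl (by linarith))
    intro t ht
    have h2t : (2:ℝ) ≤ t := ht.1
    have hlt : 0 < Real.log t := Real.log_pos (by linarith)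
    apply one_div_le_one_div_of_le hlt
    exact Real.log_le_log (by linarith) ht.2
  rw [intervalIntegral.integral_const] at h
  unfold li
  calc (x-2)/Real.log x = (x-2) • (1/Real.log x) := by rw [smul_eq_mul]; ring
  _ ≤ _ := h

lemma li_pos {x : ℝ} (hx : 3 ≤ x) : 0 < li x := by
  have := li_lb hx
  have hlx : 0 < Real.log x := Real.log_pos (by linarith)
  have : 0 < (x - 2) / Real.log x := div_pos (by linarith) hlx
  linarith [li_lb hx]

lemma li_hasDeriv {x : ℝ} (hx : 2 < x) : HasDerivAt li (1 / Real.log x) x := by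
  apply intervalIntegral.integral_hasDerivAt_right (intInt_invlog le_rfl (le_of_lt hx))
  · exact (measurable_const.div Real.measurable_log).stronglyMeasurable.stronglyMeasurableAtFilter
  · have : (0:ℝ) < Real.log x := Real.log_pos (by linarith)
    exact ContinuousAt.div continuousAt_const (Real.continuousAt_log (by linarith)) (ne_of_gt this)

lemma li_contOn : ContinuousOn li (Set.Ici 3) := by
  intro x hx
  exact ((li_hasDeriv (by simp at hx; linarith)).continuousAt).continuousWithinAt

lemma li_lower {δ : ℝ} (hδ : 0 < δ) (hδ1 : δ ≤ 1) :
    ∀ᶠ x in atTop, x ^ (1 - δ) ≤ li x := by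
  filter_upwards [eventually_ge_atTop (4:ℝ),
    (tendsto_rpow_atTop (by positivity : (0:ℝ) < δ/2)).eventually_ge_atTop (4/δ)]
    with x hx4 hxd
  have hx0 : (0:ℝ) < x := by linarith
  have hlog_pos : 0 < Real.log x := Real.log_pos (by linarith)
  have hrp : (0:ℝ) < x ^ (δ/2) := Real.rpow_pos_of_pos hx0 _
  have hlog_le : Real.log x ≤ (2/δ) * x ^ (δ/2) := by
    have h1 : Real.log (x ^ (δ/2)) = (δ/2) * Real.log x := Real.log_rpow hx0 _
    have h2 : Real.log (x ^ (δ/2)) ≤ x ^ (δ/2) := by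
      have := Real.log_le_sub_one_of_pos hrp
      linarith
    rw [h1] at h2
    calc Real.log x = (2/δ) * ((δ/2) * Real.log x) := by field_simp
    _ ≤ (2/δ) * x ^ (δ/2) := by
        apply mul_le_mul_of_nonneg_left h2 (by positivity)
  have key : x ^ (1-δ) ≤ (x - 2) / Real.log x := by
    rw [le_div_iff₀ hlog_pos]
    have hsplit : x ^ (1 - δ/2) * x ^ (δ/2) = x := by
      rw [← Real.rpow_add hx0]; norm_num
    calc x ^ (1-δ) * Real.log x ≤ x ^ (1-δ) * ((2/δ) * x ^ (δ/2)) :=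
          mul_le_mul_of_nonneg_left hlog_le (Real.rpow_nonneg hx0.le _)
    _ = (2/δ) * (x ^ (1-δ) * x ^ (δ/2)) := by ring
    _ = (2/δ) * x ^ (1-δ/2) := by rw [← Real.rpow_add hx0]; ring_nf
    _ ≤ x/2 := by
        have h1 : (0:ℝ) < x ^ (1-δ/2) := Real.rpow_pos_of_pos hx0 _
        have h2 : (4/δ) * x ^ (1-δ/2) ≤ x ^ (δ/2) * x ^ (1-δ/2) :=
          mul_le_mul_of_nonneg_right hxd h1.le
        have h3 : x ^ (δ/2) * x ^ (1-δ/2) = x := by rw [← Real.rpow_add hx0]; norm_num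
        rw [h3] at h2
        calc (2/δ) * x ^ (1-δ/2) = ((4/δ) * x ^ (1-δ/2))/2 := by ring
        _ ≤ x/2 := by linarith
    _ ≤ x - 2 := by linarith
  exact le_trans key (li_lb (by linarith))

lemma contOn_inv_li : ContinuousOn (fun t => 1 / li t) (Set.Ici 3) := by
  apply ContinuousOn.div continuousOn_const li_contOn
  intro t ht
  exact ne_of_gt (li_pos ht)

lemma intInt_inv_li {a b : ℝ} (ha : 3 ≤ a) (hb : 3 ≤ b) :
    IntervalIntegrable (fun t => 1 / li t) volume a b := by
  apply (contOn_inv_li.mono ?_).intervalIntegrable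
  intro t ht
  rw [Set.uIcc_eq_union] at ht
  rcases ht with h | h
  · exact le_trans ha h.1
  · exact le_trans hb h.1

lemma contOn_loglit : ContinuousOn (fun t => Real.log (li t) / t) (Set.Ici 3) := by
  apply ContinuousOn.div
  · apply ContinuousOn.log li_contOn
    intro t ht; exact ne_of_gt (li_pos ht)
  · exact continuousOn_id
  · intro t ht; have : (3:ℝ) ≤ t := ht; intro h; rw [h] at this; norm_num at this

lemma intInt_loglit {a b : ℝ} (ha : 3 ≤ a) (hb : 3 ≤ b) :
    IntervalIntegrable (fun t => Real.log (li t) / t) volume a b := by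
  apply (contOn_loglit.mono ?_).intervalIntegrable
  intro t ht
  rw [Set.uIcc_eq_union] at ht
  rcases ht with h | h
  · exact le_trans ha h.1
  · exact le_trans hb h.1

lemma F_eq {x : ℝ} (hx : 3 ≤ x) :
    Real.log x * Real.log (li x) - ∫ t in (3:ℝ)..x, Real.log (li t) / t
      = (∫ t in (3:ℝ)..x, 1 / li t) + Real.log 3 * Real.log (li 3) := by
  have huicc : Set.uIcc (3:ℝ) x = Set.Icc 3 x := Set.uIcc_of_le hx
  have hderiv : ∀ t ∈ Set.uIcc (3:ℝ) x,
      HasDerivAt (fun u => Real.log u * Real.log (li u))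
        (Real.log (li t) / t + 1 / li t) t := by
    intro t ht
    rw [huicc] at ht
    have ht3 : (3:ℝ) ≤ t := ht.1
    have ht0 : (0:ℝ) < t := by linarith
    have hlogt : 0 < Real.log t := Real.log_pos (by linarith)
    have hli : 0 < li t := li_pos ht3
    have h1 : HasDerivAt Real.log t⁻¹ t := Real.hasDerivAt_log (ne_of_gt ht0)
    have h2 : HasDerivAt (fun u => Real.log (li u)) ((1 / Real.log t) / li t) t :=
      (li_hasDeriv (by linarith)).log (ne_of_gt hli)
    have h3 : HasDerivAt (fun u => Real.log u * Real.log (li u)) _ t := h1.mul h2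
    convert h3 using 1
    have := ht0.ne'; have := hlogt.ne'; have := hli.ne'
    field_simp
  have hint : IntervalIntegrable (fun t => Real.log (li t) / t + 1 / li t) volume 3 x :=
    (intInt_loglit le_rfl hx).add (intInt_inv_li le_rfl hx)
  have hftc := intervalIntegral.integral_eq_sub_of_hasDerivAt hderiv hint
  rw [intervalIntegral.integral_add (intInt_loglit le_rfl hx) (intInt_inv_li le_rfl hx)] at hftc
  linarith [hftc]

lemma anti_rpow {p : ℝ} (hp : 0 < p) : AntitoneOn (fun t : ℝ => t ^ (-p)) (Set.Ici 1) := by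
  intro a ha b hb hab
  have ha0 : (0:ℝ) < a := lt_of_lt_of_le one_pos ha
  have hb0 : (0:ℝ) < b := lt_of_lt_of_le one_pos hb
  simp only
  rw [Real.rpow_neg ha0.le, Real.rpow_neg hb0.le]
  have h1 : a ^ p ≤ b ^ p := Real.rpow_le_rpow ha0.le hab hp.le
  have h2 : 0 < a ^ p := Real.rpow_pos_of_pos ha0 _
  exact inv_anti₀ h2 h1

lemma summable_tail_rpow {p : ℝ} (hp : 1 < p) (N : ℕ) :
    Summable (fun i : ℕ => ((i + N + 1 : ℕ) : ℝ) ^ (-p)) := by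
  have h : Summable (fun n : ℕ => (n:ℝ) ^ (-p)) :=
    Real.summable_nat_rpow.2 (by linarith)
  apply ((summable_nat_add_iff (N+1)).2 h).congr
  intro n
  rw [Nat.add_assoc]

lemma tail_rpow {p : ℝ} (hp : 1 < p) {N : ℕ} (hN : 1 ≤ N) :
    ∑' i : ℕ, ((i + N + 1 : ℕ) : ℝ) ^ (-p) ≤ (N:ℝ) ^ (1-p) / (p-1) := by
  have hN0 : (0:ℝ) < N := by exact_mod_cast hN
  have hNR1 : (1:ℝ) ≤ (N:ℝ) := by exact_mod_cast hN
  apply Real.tsum_le_of_sum_range_le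
  · intro i; positivity
  intro M
  have hf : AntitoneOn (fun t : ℝ => t ^ (-p)) (Set.Icc (N:ℝ) ((N:ℝ) + M)) := by
    apply (anti_rpow (by linarith)).mono
    intro t ht
    exact le_trans hNR1 ht.1
  have h := hf.sum_le_integral
  have hsum : ∑ i ∈ Finset.range M, ((i + N + 1 : ℕ):ℝ) ^ (-p)
      = ∑ i ∈ Finset.range M, ((N:ℝ) + (i + 1 : ℕ)) ^ (-p) := by
    apply Finset.sum_congr rfl
    intro i _
    congr 1
    push_cast; ring
  rw [hsum]
  refine le_trans h ?_
  have hint : ∫ t in (N:ℝ)..((N:ℝ)+M), t ^ (-p)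
      = (((N:ℝ)+M) ^ (-p+1) - (N:ℝ) ^ (-p+1)) / (-p+1) := by
    apply integral_rpow
    right
    constructor
    · intro h'; linarith
    · rw [Set.uIcc_of_le (le_add_of_nonneg_right (Nat.cast_nonneg M))]
      intro hmem
      have := hmem.1
      linarith
  rw [hint]
  have h1 : (0:ℝ) ≤ ((N:ℝ)+M) ^ (-p+1) := Real.rpow_nonneg (by positivity) _
  have h2 : (((N:ℝ)+M) ^ (-p+1) - (N:ℝ) ^ (-p+1)) / (-p+1)
      = ((N:ℝ) ^ (-p+1) - ((N:ℝ)+M) ^ (-p+1)) / (p-1) := by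
    rw [div_eq_div_iff (by linarith) (by linarith)]
    ring
  rw [h2]
  have h3 : (N:ℝ) ^ (1-p) = (N:ℝ) ^ (-p+1) := by ring_nf
  rw [h3]
  gcongr
  · linarith

noncomputable def bfun (n : ℕ) : ℝ := 1 / li n - ∫ t in (n:ℝ)..((n:ℝ)+1), 1 / li t

noncomputable def dfun (n : ℕ) : ℝ := 1 / (Nat.primeCounting n : ℝ) - 1 / li n

lemma anti_inv_li : AntitoneOn (fun t => 1 / li t) (Set.Ici 3) := by
  intro a ha b hb hab
  have ha' : (3:ℝ) ≤ a := ha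
  simp only
  apply one_div_le_one_div_of_le (li_pos ha')
  exact li_mono (by linarith) hab

lemma icc_sub_ici {n : ℕ} (hn : 3 ≤ n) : Set.Icc ((n:ℕ):ℝ) ((n+1:ℕ):ℝ) ⊆ Set.Ici 3 := by
  intro t ht
  have : ((3:ℕ):ℝ) ≤ (n:ℝ) := by exact_mod_cast hn
  have := ht.1
  simp only [Set.mem_Ici]
  push_cast at *
  linarith

lemma bfun_nonneg {n : ℕ} (hn : 3 ≤ n) : 0 ≤ bfun n := by
  have h := AntitoneOn.integral_le_sum_Ico (f := fun t => 1 / li t)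
    (a := n) (b := n+1) (by omega) (anti_inv_li.mono (icc_sub_ici hn))
  rw [Nat.Ico_succ_singleton, Finset.sum_singleton] at h
  unfold bfun
  have hc : ((n+1:ℕ):ℝ) = (n:ℝ)+1 := by push_cast; ring
  rw [hc] at h
  linarith

lemma bfun_le {n : ℕ} (hn : 3 ≤ n) : bfun n ≤ 1 / li n - 1 / li ((n+1:ℕ)) := by
  have h := AntitoneOn.sum_le_integral_Ico (f := fun t => 1 / li t)
    (a := n) (b := n+1) (by omega) (anti_inv_li.mono (icc_sub_ici hn))
  rw [Nat.Ico_succ_singleton, Finset.sum_singleton] at h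
  have hc : ((n+1:ℕ):ℝ) = (n:ℝ)+1 := by push_cast; ring
  have h' : 1 / li ((n:ℝ)+1) ≤ ∫ t in (n:ℝ)..((n:ℝ)+1), 1 / li t := by
    rw [hc] at h; exact h
  unfold bfun
  rw [hc]
  linarith

lemma summable_bfun : Summable (fun i : ℕ => bfun (i + 3)) := by
  apply summable_of_sum_range_le (c := 1 / li 3)
  · intro i; exact bfun_nonneg (by omega)
  · intro M
    have h : ∀ i ∈ Finset.range M, bfun (i+3) ≤
        (fun j => 1 / li ((j+3:ℕ))) i - (fun j => 1 / li ((j+3:ℕ))) (i+1) := by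
      intro i _
      have hb := bfun_le (n := i+3) (by omega)
      rw [show i+3+1 = i+1+3 from by omega] at hb
      exact hb
    have hsum := Finset.sum_range_sub' (f := fun j => 1 / li ((j+3:ℕ))) (n := M)
    have hpos : (3:ℝ) ≤ ((M+3:ℕ):ℝ) := by push_cast; linarith
    have h0 : 0 < li ((M+3:ℕ):ℝ) := li_pos hpos
    have h0' : 0 ≤ 1 / li ((M+3:ℕ):ℝ) := by positivity
    calc ∑ i ∈ Finset.range M, bfun (i+3)
        ≤ ∑ i ∈ Finset.range M, ((fun j => 1 / li ((j+3:ℕ))) i - (fun j => 1 / li ((j+3:ℕ))) (i+1)) :=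
          Finset.sum_le_sum h
      _ = 1 / li ((0+3:ℕ)) - 1 / li ((M+3:ℕ)) := hsum
      _ ≤ 1 / li 3 := by
          have h03 : ((0+3:ℕ):ℝ) = (3:ℝ) := by norm_num
          rw [h03]
          linarith

lemma tail_bfun {N : ℕ} (hN : 3 ≤ N) :
    ∑' i : ℕ, bfun (i + N + 1) ≤ 1 / li ((N+1:ℕ)) := by
  apply Real.tsum_le_of_sum_range_le (fun i => bfun_nonneg (by omega))
  intro M
  have h : ∀ i ∈ Finset.range M, bfun (i+N+1) ≤
      (fun j => 1 / li ((j+N+1:ℕ))) i - (fun j => 1 / li ((j+N+1:ℕ))) (i+1) := by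
    intro i _
    have hb := bfun_le (n := i+N+1) (by omega)
    rw [show i+N+1+1 = i+1+N+1 from by omega] at hb
    exact hb
  have hsum := Finset.sum_range_sub' (f := fun j => 1 / li ((j+N+1:ℕ))) (n := M)
  have hpos : (3:ℝ) ≤ ((M+N+1:ℕ):ℝ) := by
    have h1 : (3:ℝ) ≤ (N:ℝ) := by exact_mod_cast hN
    have h2 : (0:ℝ) ≤ (M:ℝ) := Nat.cast_nonneg M
    push_cast
    linarith
  have h0 : 0 < li ((M+N+1:ℕ):ℝ) := li_pos hpos
  have h0' : 0 ≤ 1 / li ((M+N+1:ℕ):ℝ) := by positivity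
  calc ∑ i ∈ Finset.range M, bfun (i+N+1)
      ≤ ∑ i ∈ Finset.range M, ((fun j => 1 / li ((j+N+1:ℕ))) i - (fun j => 1 / li ((j+N+1:ℕ))) (i+1)) :=
        Finset.sum_le_sum h
    _ = 1 / li ((0+N+1:ℕ)) - 1 / li ((M+N+1:ℕ)) := hsum
    _ ≤ 1 / li ((N+1:ℕ)) := by
        rw [show (0+N+1:ℕ) = N+1 from by omega]
        linarith

lemma pi_nat (n : ℕ) : primePi (n:ℝ) = Nat.primeCounting n := by
  simp [primePi, Nat.floor_natCast]

lemma dfun_bound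
    (hR : ∀ ε : ℝ, 0 < ε →
      (fun x : ℝ => primePi x - li x)
        =O[atTop] (fun x : ℝ => x ^ ((1:ℝ)/2 + ε)))
    {ε : ℝ} (hε : 0 < ε) (hε' : ε ≤ 1/8) :
    ∃ C : ℝ, 0 < C ∧ ∀ᶠ n : ℕ in atTop, |dfun n| ≤ C * (n:ℝ) ^ (-(3/2) + ε) := by
  obtain ⟨C₁, hC₁pos, hC₁⟩ := (hR (ε/4) (by linarith)).exists_pos
  rw [Asymptotics.isBigOWith_iff] at hC₁
  refine ⟨2*C₁, by linarith, ?_⟩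
  have hev : ∀ᶠ x : ℝ in atTop,
      (x ^ ((1:ℝ)-ε/4) ≤ li x ∧ |primePi x - li x| ≤ C₁ * x ^ ((1:ℝ)/2 + ε/4)) ∧
      (2*C₁ ≤ x ^ ((1:ℝ)/2 - ε/2) ∧ 3 ≤ x) := by
    refine Filter.Eventually.and (Filter.Eventually.and ?_ ?_) (Filter.Eventually.and ?_ ?_)
    · exact li_lower (by linarith) (by linarith)
    · filter_upwards [hC₁, eventually_ge_atTop (0:ℝ)] with x h hx0
      rwa [Real.norm_eq_abs, Real.norm_eq_abs, abs_of_nonneg (Real.rpow_nonneg hx0 _)] at h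
    · exact (tendsto_rpow_atTop (by linarith)).eventually_ge_atTop (2*C₁)
    · exact eventually_ge_atTop 3
  have hevn := tendsto_natCast_atTop_atTop.eventually hev
  filter_upwards [hevn] with n hn
  obtain ⟨⟨hli, hpi⟩, h2C, h3⟩ := hn
  set x : ℝ := (n:ℝ) with hx
  have hx0 : (0:ℝ) < x := by linarith
  have hx1 : (1:ℝ) ≤ x := by linarith
  -- li n is large
  have hrp1 : (0:ℝ) < x ^ ((1:ℝ)-ε/4) := Real.rpow_pos_of_pos hx0 _
  have hlipos : 0 < li x := lt_of_lt_of_le hrp1 hli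
  -- bound C₁ x^{1/2+ε/4} ≤ (1/2) x^{1-ε/4}
  have hkey : C₁ * x ^ ((1:ℝ)/2 + ε/4) ≤ (1/2) * x ^ ((1:ℝ)-ε/4) := by
    have hsplit : x ^ ((1:ℝ)-ε/4) = x ^ ((1:ℝ)/2 - ε/2) * x ^ ((1:ℝ)/2 + ε/4) := by
      rw [← Real.rpow_add hx0]; ring_nf
    rw [hsplit]
    have hrp2 : (0:ℝ) < x ^ ((1:ℝ)/2 + ε/4) := Real.rpow_pos_of_pos hx0 _
    calc C₁ * x ^ ((1:ℝ)/2 + ε/4) = (1/2) * ((2*C₁) * x ^ ((1:ℝ)/2 + ε/4)) := by ring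
    _ ≤ (1/2) * (x ^ ((1:ℝ)/2 - ε/2) * x ^ ((1:ℝ)/2 + ε/4)) := by
        apply mul_le_mul_of_nonneg_left (mul_le_mul_of_nonneg_right h2C hrp2.le) (by norm_num)
  -- primePi lower bound
  have habs := abs_le.1 hpi
  have hpi_lb : li x / 2 ≤ primePi x := by
    have : li x - (1/2) * x ^ ((1:ℝ)-ε/4) ≤ primePi x := by linarith [habs.1]
    have h2 : (1/2) * x ^ ((1:ℝ)-ε/4) ≤ li x / 2 := by linarith
    linarith
  have hpipos : 0 < primePi x := by linarith
  -- dfun identity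
  have hid : dfun n = (li x - primePi x) / (primePi x * li x) := by
    unfold dfun
    rw [← pi_nat n, ← hx]
    field_simp
  rw [hid, abs_div, abs_of_pos (by positivity : (0:ℝ) < primePi x * li x)]
  have hdenom : (1/2) * (x ^ ((1:ℝ)-ε/4) * x ^ ((1:ℝ)-ε/4)) ≤ primePi x * li x := by
    have h1 : (1/2) * x ^ ((1:ℝ)-ε/4) ≤ primePi x := by
      calc (1/2) * x ^ ((1:ℝ)-ε/4) ≤ li x / 2 := by linarith
      _ ≤ primePi x := hpi_lb
    calc (1/2) * (x ^ ((1:ℝ)-ε/4) * x ^ ((1:ℝ)-ε/4))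
        = ((1/2) * x ^ ((1:ℝ)-ε/4)) * x ^ ((1:ℝ)-ε/4) := by ring
    _ ≤ primePi x * li x := by
        apply mul_le_mul h1 hli hrp1.le (by linarith)
  have hnum : |li x - primePi x| ≤ C₁ * x ^ ((1:ℝ)/2 + ε/4) := by
    rw [abs_sub_comm]; exact hpi
  have hdpos : (0:ℝ) < (1/2) * (x ^ ((1:ℝ)-ε/4) * x ^ ((1:ℝ)-ε/4)) := by positivity
  calc |li x - primePi x| / (primePi x * li x)
      ≤ (C₁ * x ^ ((1:ℝ)/2 + ε/4)) / ((1/2) * (x ^ ((1:ℝ)-ε/4) * x ^ ((1:ℝ)-ε/4))) := by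
        apply div_le_div₀ (by positivity) hnum hdpos hdenom
    _ = (2*C₁) * (x ^ ((1:ℝ)/2 + ε/4) * (x ^ ((1:ℝ)-ε/4) * x ^ ((1:ℝ)-ε/4))⁻¹) := by ring
    _ = (2*C₁) * x ^ (-(3/2) + 3*ε/4) := by
        rw [← Real.rpow_add hx0, ← Real.rpow_neg hx0.le, ← Real.rpow_add hx0]
        ring_nf
    _ ≤ (2*C₁) * x ^ (-(3/2) + ε) := by
        apply mul_le_mul_of_nonneg_left (Real.rpow_le_rpow_of_exponent_le hx1 (by linarith)) (by linarith)

lemma summable_dfun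
    (hR : ∀ ε : ℝ, 0 < ε →
      (fun x : ℝ => primePi x - li x)
        =O[atTop] (fun x : ℝ => x ^ ((1:ℝ)/2 + ε))) :
    Summable (fun n : ℕ => dfun n) := by
  obtain ⟨C, hCpos, hC⟩ := dfun_bound hR (by norm_num : (0:ℝ) < 1/8) le_rfl
  apply summable_of_isBigO_nat (g := fun n : ℕ => (n:ℝ) ^ (-(3/2) + 1/8 : ℝ))
  · exact Real.summable_nat_rpow.2 (by norm_num)
  · rw [Asymptotics.isBigO_iff]
    refine ⟨C, ?_⟩
    filter_upwards [hC, eventually_ge_atTop 1] with n hn hn1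
    rw [Real.norm_eq_abs, Real.norm_eq_abs]
    have h0 : (0:ℝ) ≤ (n:ℝ) ^ (-(3/2) + 1/8 : ℝ) := Real.rpow_nonneg (Nat.cast_nonneg n) _
    rwa [abs_of_nonneg h0]

lemma tail_dfun_aux {C ε : ℝ} (hC : 0 < C) (hε : 0 < ε) (hε' : ε ≤ 1/8)
    (hsum : Summable (fun n : ℕ => dfun n))
    (n₀ : ℕ) (hb : ∀ n : ℕ, n₀ ≤ n → |dfun n| ≤ C * (n:ℝ) ^ (-(3/2) + ε))
    {N : ℕ} (hN : 3 ≤ N) (hN0 : n₀ ≤ N) :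
    |∑' i : ℕ, dfun (i + N + 1)| ≤ (C/(1/2 - ε)) * (N:ℝ) ^ (-(1/2) + ε) := by
  have hp : (1:ℝ) < 3/2 - ε := by linarith
  have hsum1 : Summable (fun i : ℕ => dfun (i + N + 1)) := by
    apply ((summable_nat_add_iff (N+1)).2 hsum).congr
    intro i; rw [Nat.add_assoc]
  have hsum2 : Summable (fun i : ℕ => C * ((i + N + 1 : ℕ):ℝ) ^ (-(3/2 - ε))) :=
    (summable_tail_rpow hp N).mul_left C
  have habs : Summable (fun i : ℕ => |dfun (i + N + 1)|) := hsum1.abs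
  have hb' : ∀ i : ℕ, |dfun (i + N + 1)| ≤ C * ((i + N + 1 : ℕ):ℝ) ^ (-(3/2 - ε)) := by
    intro i
    have := hb (i + N + 1) (by omega)
    rwa [show (-(3/2) + ε : ℝ) = -(3/2 - ε) from by ring] at this
  calc |∑' i : ℕ, dfun (i + N + 1)|
      ≤ ∑' i : ℕ, |dfun (i + N + 1)| := by
        have := norm_tsum_le_tsum_norm (f := fun i : ℕ => dfun (i + N + 1)) (by simpa [Real.norm_eq_abs] using habs)
        simpa [Real.norm_eq_abs] using this
    _ ≤ ∑' i : ℕ, C * ((i + N + 1 : ℕ):ℝ) ^ (-(3/2 - ε)) := Summable.tsum_le_tsum hb' habs hsum2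
    _ = C * ∑' i : ℕ, ((i + N + 1 : ℕ):ℝ) ^ (-(3/2 - ε)) := tsum_mul_left
    _ ≤ C * ((N:ℝ) ^ (1 - (3/2 - ε)) / (3/2 - ε - 1)) := by
        apply mul_le_mul_of_nonneg_left (tail_rpow hp (by omega)) hC.le
    _ = (C/(1/2 - ε)) * (N:ℝ) ^ (-(1/2) + ε) := by
        rw [show (1 - (3/2 - ε) : ℝ) = -(1/2) + ε from by ring,
            show (3/2 - ε - 1 : ℝ) = 1/2 - ε from by ring]
        ring

lemma sum_decomp {N : ℕ} (hN : 3 ≤ N) :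
    ∑ n ∈ Finset.Icc 2 N, 1 / (Nat.primeCounting n : ℝ)
      = 1 + (∑ n ∈ Finset.Ico 3 (N+1), dfun n)
          + (∑ n ∈ Finset.Ico 3 (N+1), bfun n)
          + ∫ t in (3:ℝ)..((N+1:ℕ):ℝ), 1 / li t := by
  have h1 : Finset.Icc 2 N = Finset.Ico 2 (N+1) := by
    rw [Finset.Ico_add_one_right_eq_Icc]
  rw [h1]
  rw [Finset.sum_eq_sum_Ico_succ_bot (by omega : 2 < N+1)]
  have h2 : (Nat.primeCounting 2 : ℝ) = 1 := by norm_num [show Nat.primeCounting 2 = 1 from by decide]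
  rw [h2]
  have h3 : ∀ n ∈ Finset.Ico 3 (N+1), 1 / (Nat.primeCounting n : ℝ)
      = dfun n + (bfun n + ∫ t in ((n:ℕ):ℝ)..((n+1:ℕ):ℝ), 1 / li t) := by
    intro n hn
    have hc : ((n+1:ℕ):ℝ) = ((n:ℕ):ℝ) + 1 := by push_cast; ring
    rw [hc]
    unfold dfun bfun
    ring
  rw [Finset.sum_congr rfl h3]
  rw [Finset.sum_add_distrib, Finset.sum_add_distrib]
  have h4 : ∑ n ∈ Finset.Ico 3 (N+1), ∫ t in ((n:ℕ):ℝ)..((n+1:ℕ):ℝ), 1 / li t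
      = ∫ t in (3:ℝ)..((N+1:ℕ):ℝ), 1 / li t := by
    have := intervalIntegral.sum_integral_adjacent_intervals_Ico
      (f := fun t => 1 / li t) (μ := volume)
      (a := fun k : ℕ => (k:ℝ)) (m := 3) (n := N+1) (by omega) ?_
    · rw [this]
      norm_num
    · intro k hk
      rw [Set.mem_Ico] at hk
      apply intInt_inv_li
      · show (3:ℝ) ≤ ((k:ℕ):ℝ)
        exact_mod_cast hk.1
      · show (3:ℝ) ≤ ((k+1:ℕ):ℝ)
        exact_mod_cast (by omega : 3 ≤ k+1)
  rw [h4]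
  ring

lemma partial_tail {f : ℕ → ℝ} (hsum : Summable fun i => f (i+3)) {N : ℕ} (hN : 3 ≤ N) :
    ∑ n ∈ Finset.Ico 3 (N+1), f n = (∑' i, f (i+3)) - ∑' i, f (i + N + 1) := by
  have h := hsum.sum_add_tsum_nat_add (N-2)
  have h2 : ∑ n ∈ Finset.Ico 3 (N+1), f n = ∑ i ∈ Finset.range (N-2), f (i+3) := by
    rw [Finset.sum_Ico_eq_sum_range]
    apply Finset.sum_congr (by rw [show N+1-3 = N-2 from by omega])
    intro i _
    rw [Nat.add_comm 3 i]
  have h3 : ∑' i, f (i + (N-2) + 3) = ∑' i, f (i + N + 1) := by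
    apply tsum_congr
    intro i
    congr 1
    omega
  rw [h2, ← h]
  rw [h3]
  ring

lemma boundary_int {x : ℝ} (hx : 4 ≤ x) :
    |∫ t in x..((⌊x⌋₊+1:ℕ):ℝ), 1 / li t| ≤ 1 / li x := by
  set N := ⌊x⌋₊ with hNdef
  have hx0 : (0:ℝ) ≤ x := by linarith
  have hfl : (N:ℝ) ≤ x := Nat.floor_le hx0
  have hfl2 : x < (N:ℝ) + 1 := Nat.lt_floor_add_one x
  have hub : ((N+1:ℕ):ℝ) = (N:ℝ)+1 := by push_cast; ring
  have hxle : x ≤ ((N+1:ℕ):ℝ) := by rw [hub]; linarith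
  have h3x : (3:ℝ) ≤ x := by linarith
  have hli : 0 < li x := li_pos h3x
  have hint1 : IntervalIntegrable (fun t => 1 / li t) volume x ((N+1:ℕ):ℝ) :=
    intInt_inv_li h3x (by rw [hub]; linarith)
  have hnn : 0 ≤ ∫ t in x..((N+1:ℕ):ℝ), 1 / li t := by
    apply intervalIntegral.integral_nonneg hxle
    intro u hu
    have : 0 < li u := li_pos (le_trans h3x hu.1)
    positivity
  have hup : ∫ t in x..((N+1:ℕ):ℝ), 1 / li t ≤ 1 / li x := by
    have hmono : ∫ t in x..((N+1:ℕ):ℝ), 1 / li t ≤ ∫ _t in x..((N+1:ℕ):ℝ), 1 / li x := by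
      apply intervalIntegral.integral_mono_on hxle hint1 intervalIntegrable_const
      intro t ht
      exact anti_inv_li h3x (le_trans h3x ht.1) ht.1
    rw [intervalIntegral.integral_const, smul_eq_mul] at hmono
    have hfac : (((N+1:ℕ):ℝ) - x) * (1 / li x) ≤ 1 * (1 / li x) := by
      apply mul_le_mul_of_nonneg_right ?_ (by positivity)
      rw [hub]; linarith
    rw [one_mul] at hfac
    linarith
  rw [abs_of_nonneg hnn]
  exact hup

lemma floor_rpow_le {x : ℝ} (hx : 4 ≤ x) {q : ℝ} (hq1 : -1 ≤ q) (hq : q ≤ 0) :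
    (⌊x⌋₊:ℝ) ^ q ≤ 2 * x ^ q := by
  have hx0 : (0:ℝ) < x := by linarith
  have h1 : x - 1 < (⌊x⌋₊:ℝ) + 1 - 1 := by
    have := Nat.sub_one_lt_floor x
    linarith [Nat.sub_one_lt_floor x]
  have h2 : x/2 ≤ (⌊x⌋₊:ℝ) := by
    have := Nat.sub_one_lt_floor x
    linarith
  have h3 : (0:ℝ) < x/2 := by linarith
  have h4 : (⌊x⌋₊:ℝ) ^ q ≤ (x/2) ^ q := Real.rpow_le_rpow_of_nonpos h3 h2 hq
  have h5 : (x/2) ^ q = x ^ q / (2:ℝ) ^ q := Real.div_rpow hx0.le (by norm_num) q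
  have h6 : x ^ q / (2:ℝ) ^ q = x ^ q * (2:ℝ) ^ (-q) := by
    rw [Real.rpow_neg (by norm_num : (0:ℝ) ≤ 2)]
    ring
  have h7 : (2:ℝ) ^ (-q) ≤ 2 := by
    calc (2:ℝ) ^ (-q) ≤ (2:ℝ) ^ (1:ℝ) :=
      Real.rpow_le_rpow_of_exponent_le (by norm_num) (by linarith)
    _ = 2 := Real.rpow_one 2
  have h8 : (0:ℝ) ≤ x ^ q := Real.rpow_nonneg hx0.le q
  calc (⌊x⌋₊:ℝ) ^ q ≤ x ^ q * (2:ℝ) ^ (-q) := by rw [← h6, ← h5]; exact h4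
  _ ≤ x ^ q * 2 := mul_le_mul_of_nonneg_left h7 h8
  _ = 2 * x ^ q := by ring

theorem sum_formula_RH
    (hR : ∀ ε : ℝ, 0 < ε →
      (fun x : ℝ => primePi x - li x)
        =O[atTop] (fun x : ℝ => x ^ ((1:ℝ)/2 + ε))) :
    ∃ B : ℝ, ∀ ε : ℝ, 0 < ε →
      (fun x : ℝ => (∑ n ∈ Finset.Icc 2 ⌊x⌋₊, 1 / (Nat.primeCounting n : ℝ)) -
          (Real.log x * Real.log (li x) -
            (∫ t in (3:ℝ)..x, Real.log (li t) / t) + B))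
        =O[atTop] (fun x : ℝ => x ^ (-(1:ℝ)/2 + ε)) := by
  have hd_sum : Summable (fun n : ℕ => dfun n) := summable_dfun hR
  have hd_sum3 : Summable (fun i : ℕ => dfun (i+3)) := (summable_nat_add_iff 3).2 hd_sum
  have hb_sum3 : Summable (fun i : ℕ => bfun (i+3)) := summable_bfun
  refine ⟨1 - Real.log 3 * Real.log (li 3) + (∑' i, dfun (i+3)) + (∑' i, bfun (i+3)), ?_⟩
  intro ε hε
  set ε' := min ε (1/8) with hε'def
  have hε'pos : 0 < ε' := lt_min hε (by norm_num)
  have hε'le : ε' ≤ 1/8 := min_le_right _ _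
  have hε'leε : ε' ≤ ε := min_le_left _ _
  obtain ⟨C, hCpos, hCev⟩ := dfun_bound hR hε'pos hε'le
  obtain ⟨n₀, hn₀⟩ := Filter.eventually_atTop.1 hCev
  have hmain : (fun x : ℝ => (∑ n ∈ Finset.Icc 2 ⌊x⌋₊, 1 / (Nat.primeCounting n : ℝ)) -
          (Real.log x * Real.log (li x) -
            (∫ t in (3:ℝ)..x, Real.log (li t) / t) +
            (1 - Real.log 3 * Real.log (li 3) + (∑' i, dfun (i+3)) + (∑' i, bfun (i+3)))))
        =O[atTop] (fun x : ℝ => x ^ (-(1:ℝ)/2 + ε')) := by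
    rw [Asymptotics.isBigO_iff]
    refine ⟨C/(1/2-ε') * 2 + 2, ?_⟩
    filter_upwards [eventually_ge_atTop ((n₀:ℝ) + 4),
      li_lower (δ := 1/4) (by norm_num) (by norm_num)] with x hx hlix
    have hn₀0 : (0:ℝ) ≤ (n₀:ℝ) := Nat.cast_nonneg n₀
    have hx4 : (4:ℝ) ≤ x := by linarith
    have hx3 : (3:ℝ) ≤ x := by linarith
    have hx1 : (1:ℝ) ≤ x := by linarith
    have hx0 : (0:ℝ) < x := by linarith
    set N := ⌊x⌋₊ with hNdef
    have hN3 : 3 ≤ N := Nat.le_floor (by push_cast; linarith)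
    have hNn₀ : n₀ ≤ N := Nat.le_floor (by push_cast; linarith)
    have hfl : (N:ℝ) ≤ x := Nat.floor_le hx0.le
    have hfl2 : x < (N:ℝ)+1 := Nat.lt_floor_add_one x
    have hcast : ((N+1:ℕ):ℝ) = (N:ℝ)+1 := by push_cast; ring
    have hdec := sum_decomp hN3
    have hdt := partial_tail (f := dfun) hd_sum3 hN3
    have hbt := partial_tail (f := bfun) hb_sum3 hN3
    have hF := F_eq hx3
    have hIsub : (∫ t in (3:ℝ)..((N+1:ℕ):ℝ), 1 / li t) - (∫ t in (3:ℝ)..x, 1 / li t)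
        = ∫ t in x..((N+1:ℕ):ℝ), 1 / li t :=
      intervalIntegral.integral_interval_sub_left
        (intInt_inv_li le_rfl (by rw [hcast]; linarith))
        (intInt_inv_li le_rfl hx3)
    have htd := tail_dfun_aux hCpos hε'pos hε'le hd_sum n₀ (fun n hn => hn₀ n hn) hN3 hNn₀
    have htb_ub := tail_bfun hN3
    have htb_nn : 0 ≤ ∑' i, bfun (i+N+1) :=
      tsum_nonneg (fun i => bfun_nonneg (by omega))
    have hbd := boundary_int hx4
    have hlipos : 0 < li x := li_pos hx3
    have hliN : li x ≤ li ((N+1:ℕ):ℝ) := li_mono (by linarith) (by rw [hcast]; linarith)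
    have hliNpos : 0 < li ((N+1:ℕ):ℝ) := lt_of_lt_of_le hlipos hliN
    have hinvli : 1 / li x ≤ x ^ (-(1:ℝ)/2 + ε') := by
      have h34 : x ^ ((1:ℝ) - 1/4) ≤ li x := hlix
      have hrp : (0:ℝ) < x ^ ((1:ℝ) - 1/4) := Real.rpow_pos_of_pos hx0 _
      calc 1 / li x ≤ 1 / x ^ ((1:ℝ) - 1/4) := one_div_le_one_div_of_le hrp h34
      _ = x ^ (-(3/4):ℝ) := by
          rw [Real.rpow_neg hx0.le, show ((1:ℝ) - 1/4) = (3/4:ℝ) from by norm_num]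
          rw [one_div]
      _ ≤ x ^ (-(1:ℝ)/2 + ε') := Real.rpow_le_rpow_of_exponent_le hx1 (by linarith)
    have hinvliN : 1 / li ((N+1:ℕ):ℝ) ≤ x ^ (-(1:ℝ)/2 + ε') :=
      le_trans (one_div_le_one_div_of_le hlipos hliN) hinvli
    -- main expression rewrite
    have hexpr : (∑ n ∈ Finset.Icc 2 N, 1 / (Nat.primeCounting n : ℝ)) -
          (Real.log x * Real.log (li x) -
            (∫ t in (3:ℝ)..x, Real.log (li t) / t) +
            (1 - Real.log 3 * Real.log (li 3) + (∑' i, dfun (i+3)) + (∑' i, bfun (i+3))))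
        = -(∑' i, dfun (i+N+1)) - (∑' i, bfun (i+N+1))
            + ((∫ t in (3:ℝ)..((N+1:ℕ):ℝ), 1 / li t) - (∫ t in (3:ℝ)..x, 1 / li t)) := by
      rw [hdec, hdt, hbt, hF]
      ring
    have habs_td : |∑' i, dfun (i+N+1)| ≤ (C/(1/2-ε')) * 2 * x ^ (-(1:ℝ)/2 + ε') := by
      have hNq : ((N:ℝ)) ^ (-(1:ℝ)/2 + ε') ≤ 2 * x ^ (-(1:ℝ)/2 + ε') :=
        floor_rpow_le hx4 (by linarith) (by linarith)
      have heq : (-(1/2) + ε' : ℝ) = (-(1:ℝ)/2 + ε') := by norm_num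
      rw [heq] at htd
      calc |∑' i, dfun (i+N+1)| ≤ (C/(1/2-ε')) * (N:ℝ) ^ (-(1:ℝ)/2 + ε') := htd
      _ ≤ (C/(1/2-ε')) * (2 * x ^ (-(1:ℝ)/2 + ε')) := by
          apply mul_le_mul_of_nonneg_left hNq
          have hhalf : (0:ℝ) < 1/2 - ε' := by linarith
          positivity
      _ = (C/(1/2-ε')) * 2 * x ^ (-(1:ℝ)/2 + ε') := by ring
    rw [Real.norm_eq_abs, Real.norm_eq_abs, hexpr, hIsub]
    have hxq : 0 ≤ x ^ (-(1:ℝ)/2 + ε') := Real.rpow_nonneg hx0.le _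
    rw [abs_of_nonneg hxq]
    have habs_tb : |∑' i, bfun (i+N+1)| ≤ x ^ (-(1:ℝ)/2 + ε') := by
      rw [abs_of_nonneg htb_nn]
      exact le_trans htb_ub hinvliN
    have habs_bd : |∫ t in x..((N+1:ℕ):ℝ), 1 / li t| ≤ x ^ (-(1:ℝ)/2 + ε') :=
      le_trans hbd hinvli
    calc |(-(∑' i, dfun (i+N+1)) - (∑' i, bfun (i+N+1))
            + ∫ t in x..((N+1:ℕ):ℝ), 1 / li t)|
        ≤ |∑' i, dfun (i+N+1)| + |∑' i, bfun (i+N+1)|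
            + |∫ t in x..((N+1:ℕ):ℝ), 1 / li t| := by
          calc |(-(∑' i, dfun (i+N+1)) - (∑' i, bfun (i+N+1))
              + ∫ t in x..((N+1:ℕ):ℝ), 1 / li t)|
              ≤ |(-(∑' i, dfun (i+N+1)) - (∑' i, bfun (i+N+1)))|
                + |∫ t in x..((N+1:ℕ):ℝ), 1 / li t| := abs_add_le _ _
          _ ≤ |∑' i, dfun (i+N+1)| + |∑' i, bfun (i+N+1)|
                + |∫ t in x..((N+1:ℕ):ℝ), 1 / li t| := by
              have := abs_sub (-(∑' i, dfun (i+N+1))) (∑' i, bfun (i+N+1))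
              rw [abs_neg] at this
              linarith
      _ ≤ (C/(1/2-ε')) * 2 * x ^ (-(1:ℝ)/2 + ε') + x ^ (-(1:ℝ)/2 + ε') + x ^ (-(1:ℝ)/2 + ε') := by
          linarith
      _ = (C/(1/2-ε') * 2 + 2) * x ^ (-(1:ℝ)/2 + ε') := by ring
  refine hmain.trans ?_
  rw [Asymptotics.isBigO_iff]
  refine ⟨1, ?_⟩
  filter_upwards [eventually_ge_atTop (1:ℝ)] with x hx1
  have hx0 : (0:ℝ) < x := by linarith
  rw [Real.norm_eq_abs, Real.norm_eq_abs,
      abs_of_nonneg (Real.rpow_nonneg hx0.le _), abs_of_nonneg (Real.rpow_nonneg hx0.le _),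
      one_mul]
  exact Real.rpow_le_rpow_of_exponent_le hx1 (by linarith)
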